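/- Let θ, p_C, σ_B², σ_D², φ_CB, φ_CD > 0, ξ_B > 0, ξ_D > 0, and let A, B be nonnegative constants with A + B > 0. Define f(α) = exp(−ξ_B·(θ + σ_B²)/(φ_CB·p_C·(α − ξ_B + α·ξ_B))) and g(α) = exp(−ξ_B·σ_D²/(φ_CD·p_C·(α − ξ_B + α·ξ_B))). Then the function P̃_out(α) = 1 − (A + B)·f(α)·g(α) is strictly decreasing on the interval (ξ_B/(1+ξ_B), (ξ_B·ξ_D + ξ_B)/(ξ_B·ξ_D + ξ_B + ξ_D)]. -/
import Mathlib


open Set Real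

/-- on the first branch, the upper bound of the joint outage
probability is strictly decreasing in the power splitting factor `α`. -/
theorem outage_upper_bound_strictAnti_first_branch
    (θ pC σB2 σD2 φCB φCD ξB ξD A B : ℝ)
    (hθ : 0 < θ) (hpC : 0 < pC) (hσB : 0 < σB2) (hσD : 0 < σD2)
    (hφCB : 0 < φCB) (hφCD : 0 < φCD) (hξB : 0 < ξB) (hξD : 0 < ξD)
    (hA : 0 ≤ A) (hB : 0 ≤ B) (hAB : 0 < A + B) :
    let f : ℝ → ℝ := fun α =>
      Real.exp (-(ξB * (θ + σB2)) / (φCB * pC * (α - ξB + α * ξB)))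
    let g : ℝ → ℝ := fun α =>
      Real.exp (-(ξB * σD2) / (φCD * pC * (α - ξB + α * ξB)))
    StrictAntiOn (fun α => 1 - (A + B) * f α * g α)
      (Ioc (ξB / (1 + ξB)) ((ξB * ξD + ξB) / (ξB * ξD + ξB + ξD))) := by
  intro f g a ha b hb hab
  have h1ξ : (0:ℝ) < 1 + ξB := by linarith
  -- denominators
  have hda : 0 < a - ξB + a * ξB := by
    have := ha.1
    rw [div_lt_iff₀ h1ξ] at this
    nlinarith
  have hdb : 0 < b - ξB + b * ξB := by nlinarith
  have hdd : a - ξB + a * ξB < b - ξB + b * ξB := by nlinarith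
  have key : ∀ (K c : ℝ), 0 < K → 0 < c →
      -K / (c * (a - ξB + a * ξB)) < -K / (c * (b - ξB + b * ξB)) := by
    intro K c hK hc
    rw [neg_div, neg_div, neg_lt_neg_iff]
    exact div_lt_div_of_pos_left hK (by positivity) (by nlinarith)
  have h1 := key (ξB * (θ + σB2)) (φCB * pC) (by positivity) (by positivity)
  have h2 := key (ξB * σD2) (φCD * pC) (by positivity) (by positivity)
  have hfg : f a * g a < f b * g b := by
    simp only [f, g, ← Real.exp_add]
    exact Real.exp_lt_exp.2 (by linarith)
  have := mul_lt_mul_of_pos_left hfg hAB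
  simp only [mul_assoc]
  linarith
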